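/- In the Earley algorithm, a dotted item [A → α • β] is inserted in table entry E_{i,j} if and only if (A1) S ⇒* a_1⋯a_i A γ for some γ, and (A2) α ⇒* a_{i+1}⋯a_j. -/

import Mathlib

/-! Formalization of Earley parsing and the Nederhof–Satta variant. -/

variable {T N : Type}

/-- A context-free grammar: a start nonterminal and a set of productions. -/
structure CFG (T N : Type) where
  initial : N
  rules : Set (N × List (Symbol T N))

/-- One rewriting step of the grammar. -/
def CFG.Produces (g : CFG T N) (u v : List (Symbol T N)) : Prop :=
  ∃ A α p q, (A, α) ∈ g.rules ∧ u = p ++ [Symbol.nonterminal A] ++ q ∧ v = p ++ α ++ q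

/-- The derivation relation ⇒* (reflexive-transitive closure of rewriting). -/
def CFG.Derives (g : CFG T N) : List (Symbol T N) → List (Symbol T N) → Prop :=
  Relation.ReflTransGen g.Produces

/-- The language of the grammar: { w | S ⇒* w }. -/
def CFG.language (g : CFG T N) : Set (List T) :=
  { w | g.Derives [Symbol.nonterminal g.initial] (w.map Symbol.terminal) }

/-- `inputSlice w i j` is the substring a_{i+1}⋯a_j of `w` (0-based: w[i..j)), as symbols. -/
def inputSlice (w : List T) (i j : ℕ) : List (Symbol T N) :=
  ((w.take j).drop i).map Symbol.terminal

/-- The least Earley table: `Earley g w A α β i j` means the dotted item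
[A → α • β] is inserted in E_{i,j}. -/
inductive Earley (g : CFG T N) (w : List T) :
    N → List (Symbol T N) → List (Symbol T N) → ℕ → ℕ → Prop where
  | init {α} : (g.initial, α) ∈ g.rules → Earley g w g.initial [] α 0 0
  | predict {B α A β i j γ} : Earley g w B α (Symbol.nonterminal A :: β) i j →
      (A, γ) ∈ g.rules → Earley g w A [] γ j j
  | scan {A α a β i j} : Earley g w A α (Symbol.terminal a :: β) i j →
      w[j]? = some a → Earley g w A (α ++ [Symbol.terminal a]) β i (j + 1)
  | complete {A α B β i k γ j} : Earley g w A α (Symbol.nonterminal B :: β) i k →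
      Earley g w B γ [] k j → (B, γ) ∈ g.rules →
      Earley g w A (α ++ [Symbol.nonterminal B]) β i j

mutual
  /-- Forward part of the variant: `VarU g w β j` means suffix item [β] ∈ U_j. -/
  inductive VarU (g : CFG T N) (w : List T) : List (Symbol T N) → ℕ → Prop where
    | init {α} : (g.initial, α) ∈ g.rules → VarU g w α 0
    | predict {A β j γ} : VarU g w (Symbol.nonterminal A :: β) j →
        (A, γ) ∈ g.rules → VarU g w γ j
    | scan {a β j} : VarU g w (Symbol.terminal a :: β) j → w[j]? = some a →
        VarU g w β (j + 1)
    | complete {B β k γ j} : VarU g w (Symbol.nonterminal B :: β) k → (B, γ) ∈ g.rules →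
        VarT g w γ k j → VarU g w β j

  /-- Backward part of the variant: `VarT g w β j m` means suffix item [β] ∈ T_{j,m}. -/
  inductive VarT (g : CFG T N) (w : List T) : List (Symbol T N) → ℕ → ℕ → Prop where
    | empty {m} : VarU g w [] m → VarT g w [] m m
    | scan {a β j m} : VarU g w (Symbol.terminal a :: β) j → w[j]? = some a →
        VarT g w β (j + 1) m → VarT g w (Symbol.terminal a :: β) j m
    | complete {B β k γ j m} : VarU g w (Symbol.nonterminal B :: β) k → (B, γ) ∈ g.rules →
        VarT g w γ k j → VarT g w β j m → VarT g w (Symbol.nonterminal B :: β) k m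
end

lemma produces_of_rule {g : CFG T N} {A γ} (hr : (A, γ) ∈ g.rules) (p q : List (Symbol T N)) :
    g.Produces (p ++ [Symbol.nonterminal A] ++ q) (p ++ γ ++ q) := ⟨A, γ, p, q, hr, rfl, rfl⟩

lemma produces_append_left {g : CFG T N} {u v : List (Symbol T N)} (h : g.Produces u v)
    (p : List (Symbol T N)) : g.Produces (p ++ u) (p ++ v) := by
  obtain ⟨A, γ, p', q', hr, hu, hv⟩ := h
  exact ⟨A, γ, p ++ p', q', hr, by simp [hu], by simp [hv]⟩

lemma produces_append_right {g : CFG T N} {u v : List (Symbol T N)} (h : g.Produces u v)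
    (q : List (Symbol T N)) : g.Produces (u ++ q) (v ++ q) := by
  obtain ⟨A, γ, p', q', hr, hu, hv⟩ := h
  exact ⟨A, γ, p', q' ++ q, hr, by simp [hu], by simp [hv]⟩

lemma derives_append_left {g : CFG T N} {u v : List (Symbol T N)} (h : g.Derives u v)
    (p : List (Symbol T N)) : g.Derives (p ++ u) (p ++ v) := by
  induction h with
  | refl => exact Relation.ReflTransGen.refl
  | tail _ hp ih => exact ih.tail (produces_append_left hp p)

lemma derives_append_right {g : CFG T N} {u v : List (Symbol T N)} (h : g.Derives u v)
    (q : List (Symbol T N)) : g.Derives (u ++ q) (v ++ q) := by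
  induction h with
  | refl => exact Relation.ReflTransGen.refl
  | tail _ hp ih => exact ih.tail (produces_append_right hp q)

lemma derives_append_congr {g : CFG T N} {u u' v v' : List (Symbol T N)}
    (h1 : g.Derives u u') (h2 : g.Derives v v') : g.Derives (u ++ v) (u' ++ v') :=
  (derives_append_right h1 v).trans (derives_append_left h2 u')

/-- Step-counted derivations. -/
inductive Der (g : CFG T N) : ℕ → List (Symbol T N) → List (Symbol T N) → Prop where
  | refl (u) : Der g 0 u u
  | tail {n u v x} : Der g n u v → g.Produces v x → Der g (n + 1) u x

lemma Der.toDerives {g : CFG T N} {n u v} (h : Der g n u v) : g.Derives u v := by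
  induction h with
  | refl => exact Relation.ReflTransGen.refl
  | tail _ hp ih => exact ih.tail hp

lemma derives_iff_der {g : CFG T N} {u v} : g.Derives u v ↔ ∃ n, Der g n u v := by
  constructor
  · intro h
    induction h with
    | refl => exact ⟨0, Der.refl u⟩
    | tail _ hp ih => obtain ⟨n, hn⟩ := ih; exact ⟨n + 1, hn.tail hp⟩
  · rintro ⟨n, h⟩; exact h.toDerives

lemma Der.head {g : CFG T N} {n u v x} (hp : g.Produces u v) (h : Der g n v x) :
    Der g (n + 1) u x := by
  induction h with
  | refl => exact (Der.refl u).tail hp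
  | tail _ hq ih => exact (ih hp).tail hq

lemma Der.head_inv {g : CFG T N} : ∀ {n u x}, Der g (n + 1) u x →
    ∃ v, g.Produces u v ∧ Der g n v x := by
  intro n
  induction n with
  | zero =>
    intro u x h
    cases h with
    | tail h1 h2 => cases h1; exact ⟨x, h2, Der.refl x⟩
  | succ k ih =>
    intro u x h
    cases h with
    | tail h1 h2 =>
      obtain ⟨v, hp, hd⟩ := ih h1
      exact ⟨v, hp, hd.tail h2⟩

lemma Der.eq_of_no_step {g : CFG T N} {n u v} (h : Der g n u v)
    (hu : ∀ x, ¬ g.Produces u x) : v = u ∧ n = 0 := by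
  induction h with
  | refl => exact ⟨rfl, rfl⟩
  | tail h1 h2 ih =>
    obtain ⟨rfl, rfl⟩ := ih hu
    exact absurd h2 (hu _)

lemma no_step_of_terminal {g : CFG T N} {y : List T} {v} :
    ¬ g.Produces (y.map Symbol.terminal) v := by
  rintro ⟨A, γ, p, q, hr, hu, hv⟩
  have : Symbol.nonterminal A ∈ y.map Symbol.terminal := by
    rw [hu]; simp
  simp at this

lemma Der.terminal_eq {g : CFG T N} {n v} {y : List T}
    (h : Der g n (y.map Symbol.terminal) v) : v = y.map Symbol.terminal ∧ n = 0 :=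
  h.eq_of_no_step fun _ => no_step_of_terminal

lemma produces_append_split {g : CFG T N} {x1 x2 y : List (Symbol T N)}
    (h : g.Produces (x1 ++ x2) y) :
    (∃ y1, g.Produces x1 y1 ∧ y = y1 ++ x2) ∨ (∃ y2, g.Produces x2 y2 ∧ y = x1 ++ y2) := by
  obtain ⟨A, γ, p, q, hr, hu, hv⟩ := h
  rw [List.append_assoc] at hu
  rcases List.append_eq_append_iff.mp hu with ⟨a', hp, hx2⟩ | ⟨c', hx1, hq⟩
  · right
    exact ⟨a' ++ γ ++ q, ⟨A, γ, a', q, hr, by simp [hx2], by simp⟩, by simp [hv, hp]⟩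
  · cases c' with
    | nil =>
      right
      simp at hx1 hq
      exact ⟨γ ++ q, ⟨A, γ, [], q, hr, by simp [hq], by simp⟩, by simp [hv, hx1]⟩
    | cons s c'' =>
      left
      obtain ⟨rfl, hq'⟩ : Symbol.nonterminal A = s ∧ q = c'' ++ x2 := by
        have := hq.symm
        simp at this
        exact ⟨this.1.symm, this.2.symm⟩
      exact ⟨p ++ γ ++ c'', ⟨A, γ, p, c'', hr, by simp [hx1], by simp⟩,
        by simp [hv, hq']⟩

lemma Der.append_split {g : CFG T N} {n uv x} (h : Der g n uv x) :
    ∀ u v, uv = u ++ v → ∃ n1 n2 x1 x2, n = n1 + n2 ∧ x = x1 ++ x2 ∧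
      Der g n1 u x1 ∧ Der g n2 v x2 := by
  induction h with
  | refl u' =>
    rintro u v rfl
    exact ⟨0, 0, u, v, rfl, rfl, Der.refl u, Der.refl v⟩
  | tail h1 h2 ih =>
    rintro u v rfl
    obtain ⟨n1, n2, x1, x2, rfl, rfl, d1, d2⟩ := ih u v rfl
    rcases produces_append_split h2 with ⟨y1, hp, rfl⟩ | ⟨y2, hp, rfl⟩
    · exact ⟨n1 + 1, n2, y1, x2, by omega, rfl, d1.tail hp, d2⟩
    · exact ⟨n1, n2 + 1, x1, y2, by omega, rfl, d1, d2.tail hp⟩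


section Slice

lemma slice_self (w : List T) (i : ℕ) : inputSlice (N := N) w i i = [] := by
  simp [inputSlice, List.drop_take]

lemma slice_eq (w : List T) (i j : ℕ) :
    inputSlice (N := N) w i j = ((w.drop i).take (j - i)).map Symbol.terminal := by
  simp [inputSlice, List.drop_take]

lemma slice_length (w : List T) (i j : ℕ) :
    (inputSlice (N := N) w i j).length = min j w.length - i := by
  simp [inputSlice]

lemma slice_append {w : List T} {i k j : ℕ} (hik : i ≤ k) (hkj : k ≤ j) :
    inputSlice (N := N) w i j = inputSlice w i k ++ inputSlice w k j := by
  rw [slice_eq, slice_eq, slice_eq, ← List.map_append]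
  congr 1
  have h1 : j - i = (k - i) + (j - k) := by omega
  rw [h1, List.take_add]
  congr 2
  rw [List.drop_drop]
  congr 1
  omega

lemma slice_succ {w : List T} {i j : ℕ} {a : T} (hij : i ≤ j) (ha : w[j]? = some a) :
    inputSlice (N := N) w i (j + 1) = inputSlice w i j ++ [Symbol.terminal a] := by
  have hj : j < w.length := by
    exact (List.getElem?_eq_some_iff.mp ha).1
  rw [inputSlice, inputSlice, List.take_succ, ha]
  rw [List.drop_append_of_le_length (by simp; omega)]
  simp

lemma prefix_slice {w : List T} {i j : ℕ} (hij : i ≤ j) :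
    (w.take i).map Symbol.terminal ++ inputSlice (N := N) w i j =
      (w.take j).map (Symbol.terminal (N := N)) := by
  rw [inputSlice, ← List.map_append]
  congr 1
  have : w.take i = (w.take j).take i := by
    rw [List.take_take]; congr 1; omega
  rw [this, List.take_append_drop]

lemma slice_split {w : List T} {i k : ℕ} (hik : i ≤ k) (hk : k ≤ w.length)
    {x1 x2 : List (Symbol T N)} (h : x1 ++ x2 = inputSlice w i k) :
    ∃ m, i ≤ m ∧ m ≤ k ∧ x1 = inputSlice w i m ∧ x2 = inputSlice w m k := by
  have hlen : x1.length + x2.length = k - i := by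
    have := congrArg List.length h
    rw [List.length_append, slice_length] at this
    omega
  refine ⟨i + x1.length, by omega, by omega, ?_, ?_⟩
  · have : x1 = (inputSlice (N := N) w i k).take x1.length := by
      rw [← h]; simp
    conv_lhs => rw [this]
    simp only [slice_eq]
    rw [← List.map_take]
    congr 1
    rw [List.take_take]
    congr 1
    omega
  · have : x2 = (inputSlice (N := N) w i k).drop x1.length := by
      rw [← h]; simp
    conv_lhs => rw [this]
    simp only [slice_eq]
    rw [← List.map_drop]
    congr 1
    rw [List.drop_take, List.drop_drop]
    congr 1
    omega

end Slice

section Forward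

variable {g : CFG T N} {w : List T}

lemma earley_bounds {A α β i j} (h : Earley g w A α β i j) : i ≤ j ∧ j ≤ w.length := by
  induction h with
  | init _ => exact ⟨le_refl 0, Nat.zero_le _⟩
  | predict _ _ ih => exact ⟨le_refl _, ih.2⟩
  | @scan A' α' a' β' i' j' _ hg ih =>
    have hlt : j' < w.length := by
      exact (List.getElem?_eq_some_iff.mp hg).1
    exact ⟨by omega, by omega⟩
  | complete _ _ _ ih1 ih2 => exact ⟨ih1.1.trans ih2.1, ih2.2⟩

lemma earley_rule {A α β i j} (h : Earley g w A α β i j) : (A, α ++ β) ∈ g.rules := by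
  induction h with
  | init hr => exact hr
  | predict _ hr _ => exact hr
  | scan _ _ ih => simpa [List.append_assoc] using ih
  | complete _ _ _ ih1 _ => simpa [List.append_assoc] using ih1

lemma earley_A2 {A α β i j} (h : Earley g w A α β i j) : g.Derives α (inputSlice w i j) := by
  induction h with
  | init _ => rw [slice_self]; exact Relation.ReflTransGen.refl
  | predict _ _ _ => rw [slice_self]; exact Relation.ReflTransGen.refl
  | @scan A α a β i j hprem hg ih =>
    rw [slice_succ (earley_bounds hprem).1 hg]
    exact derives_append_congr ih Relation.ReflTransGen.refl
  | @complete A α B β i k γ j hA hB hr ih1 ih2 =>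
    rw [slice_append (earley_bounds hA).1 (earley_bounds hB).1]
    have step : g.Produces (inputSlice w i k ++ [Symbol.nonterminal B])
        (inputSlice w i k ++ γ) := by
      have := produces_of_rule hr (inputSlice (N := N) w i k) []
      simpa using this
    exact (derives_append_congr ih1 Relation.ReflTransGen.refl).trans
      ((Relation.ReflTransGen.single step).trans
        (derives_append_left ih2 _))

end Forward

section Backward

variable {g : CFG T N} {w : List T}

lemma Der.zero_eq {u v : List (Symbol T N)} (h : Der g 0 u v) : u = v := by
  cases h; rfl

lemma earley_progress :
    ∀ (n : ℕ) (μ : List (Symbol T N)) (i k l : ℕ) (A : N) (α β : List (Symbol T N)),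
      i ≤ k → k ≤ w.length →
      Der g n μ (inputSlice w i k) →
      Earley g w A α (μ ++ β) l i →
      Earley g w A (α ++ μ) β l k := by
  intro n
  induction n using Nat.strong_induction_on with
  | _ n IHn =>
  intro μ
  induction μ with
  | nil =>
    intro i k l A α β hik hk hder hE
    have h0 : Der g n ((([] : List T)).map Symbol.terminal) (inputSlice w i k) := by
      simpa using hder
    obtain ⟨hs, -⟩ := h0.terminal_eq
    have hlen := congrArg List.length hs
    rw [slice_length] at hlen
    simp at hlen
    have : k = i := by omega
    subst this
    simpa using hE
  | cons s μ' IHμ =>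
    intro i k l A α β hik hk hder hE
    obtain ⟨n1, n2, x1, x2, hn, hx, h1, h2⟩ := hder.append_split [s] μ' rfl
    obtain ⟨m, him, hmk, hx1, hx2⟩ := slice_split hik hk hx.symm
    subst hx1
    subst hx2
    have hmw : m ≤ w.length := le_trans hmk hk
    cases s with
    | terminal a =>
      have h1' : Der g n1 (([a]).map Symbol.terminal) (inputSlice w i m) := by
        simpa using h1
      obtain ⟨hs, hn1⟩ := h1'.terminal_eq
      have him1 : m = i + 1 := by
        have hl := congrArg List.length hs
        rw [slice_length] at hl
        simp at hl
        omega
      subst him1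
      have hiw : i < w.length := by omega
      have hga : w[i]? = some w[i] := by
        exact List.getElem?_eq_getElem hiw
      have hss := slice_succ (N := N) (le_refl i) hga
      rw [slice_self] at hss
      simp at hss
      have haw : w[i] = a := by
        have := hss.symm.trans hs
        simp at this
        exact this
      have hget : w[i]? = some a := by rw [hga, haw]
      have hsc : Earley g w A (α ++ [Symbol.terminal a]) (μ' ++ β) l (i + 1) :=
        Earley.scan hE hget
      obtain rfl : n = n2 := by omega
      have := IHμ (i + 1) k l A (α ++ [Symbol.terminal a]) β (by omega) hk h2 hsc
      simpa [List.append_assoc] using this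
    | nonterminal B =>
      cases n1 with
      | zero =>
        exfalso
        have heq := h1.zero_eq
        have : Symbol.nonterminal B ∈ inputSlice (N := N) w i m := by
          rw [← heq]; simp
        rw [inputSlice] at this
        obtain ⟨a, -, hcontra⟩ := List.mem_map.mp this
        cases hcontra
      | succ n1' =>
        obtain ⟨v, hp, hd⟩ := Der.head_inv h1
        obtain ⟨C, γ, p, q, hrC, hu, hv⟩ := hp
        have hpq : p = [] ∧ C = B ∧ q = [] := by
          cases p with
          | cons s p' =>
            exfalso
            have := congrArg List.length hu
            simp at this
          | nil =>
            simp at hu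
            exact ⟨rfl, hu.1.symm, hu.2⟩
        obtain ⟨rfl, rfl, rfl⟩ := hpq
        obtain rfl : v = γ := by simpa using hv
        have hB0 : Earley g w C [] v i i := Earley.predict hE hrC
        have hBd : Earley g w C v [] i m := by
          have := IHn n1' (by omega) v i m i C [] [] him hmw hd (by simpa using hB0)
          simpa using this
        have hCompl : Earley g w A (α ++ [Symbol.nonterminal C]) (μ' ++ β) l m :=
          Earley.complete hE hBd hrC
        have := IHn n2 (by omega) μ' m k l A (α ++ [Symbol.nonterminal C]) β hmk hk h2 hCompl
        simpa [List.append_assoc] using this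

end Backward

section Predict

variable {g : CFG T N} {w : List T}

lemma earley_predict_complete :
    ∀ (n : ℕ) (m : ℕ) (x γ : List (Symbol T N)) (A : N) (δ : List (Symbol T N)) (i : ℕ),
      i ≤ w.length →
      Der g n [Symbol.nonterminal g.initial] (x ++ Symbol.nonterminal A :: γ) →
      Der g m x ((w.take i).map Symbol.terminal) →
      (A, δ) ∈ g.rules → Earley g w A [] δ i i := by
  intro n
  induction n with
  | zero =>
    intro m x γ A δ i hi hd hx hr
    have h0 := hd.zero_eq
    cases x with
    | cons s x' =>
      exfalso
      have := congrArg List.length h0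
      simp at this
    | nil =>
      simp at h0
      obtain ⟨hSA, -⟩ := h0
      have hx0 : (w.take i).map (Symbol.terminal (N := N)) = [] :=
        (Der.terminal_eq (y := ([] : List T)) (by simpa using hx)).1
      rw [List.map_eq_nil_iff] at hx0
      rw [List.take_eq_nil_iff] at hx0
      obtain rfl : i = 0 := by
        rcases hx0 with h | h
        · exact h
        · simp [h] at hi; omega
      cases hSA
      exact Earley.init hr
  | succ n ih =>
    intro m x γ A δ i hi hd hx hr
    cases hd with
    | tail h1 h2 =>
      obtain ⟨C, γC, p, q, hrC, huv, hres⟩ := h2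
      subst huv
      rw [List.append_assoc] at hres
      rcases List.append_eq_append_iff.mp hres with ⟨a', hpa, hrest⟩ | ⟨c', hxc, hrest⟩
      · -- p = x ++ a', A::γ = a' ++ (γC ++ q)
        cases a' with
        | nil =>
          simp at hpa hrest
          subst hpa
          cases γC with
          | nil =>
            -- q = A :: γ ; one more step on prefix
            simp at hrest
            subst hrest
            have step : g.Produces (p ++ [Symbol.nonterminal C]) p := by
              have := produces_of_rule hrC p ([] : List (Symbol T N))
              simpa using this
            have hx' : Der g (m + 1) (p ++ [Symbol.nonterminal C])
                ((w.take i).map Symbol.terminal) := Der.head step hx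
            exact ih (m + 1) (p ++ [Symbol.nonterminal C]) γ A δ i hi
              (by simpa [List.append_assoc] using h1) hx' hr
          | cons s t =>
            obtain ⟨rfl, rfl⟩ : s = Symbol.nonterminal A ∧ γ = t ++ q := by
              have := hrest
              simp at this
              exact ⟨this.1.symm, this.2⟩
            have hC : Earley g w C [] (Symbol.nonterminal A :: t) i i :=
              ih m p q C (Symbol.nonterminal A :: t) i hi
                (by simpa [List.append_assoc] using h1) hx hrC
            exact Earley.predict hC hr
        | cons s a'' =>
          obtain ⟨rfl, rfl⟩ : s = Symbol.nonterminal A ∧ γ = a'' ++ (γC ++ q) := by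
            have := hrest
            simp at this
            exact ⟨this.1.symm, this.2⟩
          subst hpa
          exact ih m x (a'' ++ [Symbol.nonterminal C] ++ q) A δ i hi
            (by simpa [List.append_assoc] using h1) hx hr
      · -- x = p ++ c', γC ++ q = c' ++ A::γ
        rcases List.append_eq_append_iff.mp hrest with ⟨b', hcb, hq⟩ | ⟨d', hγC, hAγ⟩
        · -- c' = γC ++ b', q = b' ++ A::γ
          subst hcb
          subst hq
          subst hxc
          have step : g.Produces (p ++ [Symbol.nonterminal C] ++ b') (p ++ γC ++ b') :=
            produces_of_rule hrC p b'
          have hx' : Der g (m + 1) (p ++ [Symbol.nonterminal C] ++ b')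
              ((w.take i).map Symbol.terminal) := Der.head step (by simpa [List.append_assoc] using hx)
          exact ih (m + 1) (p ++ [Symbol.nonterminal C] ++ b') γ A δ i hi
            (by simpa [List.append_assoc] using h1) hx' hr
        · cases d' with
          | nil =>
            simp at hγC hAγ
            subst hγC
            subst hxc
            have step : g.Produces (p ++ [Symbol.nonterminal C]) (p ++ γC) := by
              have := produces_of_rule hrC p ([] : List (Symbol T N))
              simpa using this
            have hx' : Der g (m + 1) (p ++ [Symbol.nonterminal C])
                ((w.take i).map Symbol.terminal) := Der.head step hx
            exact ih (m + 1) (p ++ [Symbol.nonterminal C]) γ A δ i hi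
              (by simpa [← hAγ, List.append_assoc] using h1) hx' hr
          | cons s t =>
            obtain ⟨rfl, rfl⟩ : s = Symbol.nonterminal A ∧ γ = t ++ q := by
              have := hAγ
              simp at this
              exact ⟨this.1.symm, this.2⟩
            subst hγC
            subst hxc
            -- split the derivation of p ++ c' to the terminal prefix
            obtain ⟨m1, m2, w1, w2, hm, hw, hdp, hdc⟩ := hx.append_split p c' rfl
            obtain ⟨y1, y2, htake, hwy1, hwy2⟩ := List.map_eq_append_iff.mp hw
            have hi0 : y1.length ≤ i := by
              have := congrArg List.length htake
              simp at this
              omega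
            have hy1 : y1 = w.take y1.length := by
              have h5 : (w.take i).take y1.length = y1 := by
                rw [htake]; simp
              conv_lhs => rw [← h5]
              rw [List.take_take]
              congr 1
              omega
            have hy2 : w2 = inputSlice w y1.length i := by
              rw [← hwy2, inputSlice]
              congr 1
              rw [htake]
              simp
            have hC : Earley g w C [] (c' ++ Symbol.nonterminal A :: t) y1.length y1.length :=
              ih m1 p q C (c' ++ Symbol.nonterminal A :: t) y1.length
                (le_trans hi0 hi)
                (by simpa [List.append_assoc] using h1)
                (by rw [← hy1, hwy1]; exact hdp) hrC
            have hC' : Earley g w C c' (Symbol.nonterminal A :: t) y1.length i := by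
              have := earley_progress m2 c' y1.length i y1.length C []
                (Symbol.nonterminal A :: t) hi0 hi (by rw [← hy2]; exact hdc)
                (by simpa using hC)
              simpa using this
            exact Earley.predict hC' hr

end Predict

section Main

variable {g : CFG T N} {w : List T}

lemma earley_A1 {A α β i j} (h : Earley g w A α β i j) :
    ∃ γ, g.Derives [Symbol.nonterminal g.initial]
      ((w.take i).map Symbol.terminal ++ Symbol.nonterminal A :: γ) := by
  induction h with
  | init hr =>
    refine ⟨[], ?_⟩
    simp
    exact Relation.ReflTransGen.refl
  | @predict B αB A' β' i' j' γ' hprem hr ih =>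
    obtain ⟨δ, hδ⟩ := ih
    refine ⟨β' ++ δ, ?_⟩
    have hruleB := earley_rule hprem
    have hb := earley_bounds hprem
    have step : g.Produces ((w.take i').map Symbol.terminal ++ Symbol.nonterminal B :: δ)
        ((w.take i').map Symbol.terminal ++ (αB ++ (Symbol.nonterminal A' :: (β' ++ δ)))) := by
      have := produces_of_rule hruleB ((w.take i').map Symbol.terminal) δ
      simpa [List.append_assoc] using this
    have base : g.Derives
        ((w.take i').map Symbol.terminal ++ (αB ++ (Symbol.nonterminal A' :: (β' ++ δ))))
        ((w.take i').map Symbol.terminal ++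
          (inputSlice w i' j' ++ (Symbol.nonterminal A' :: (β' ++ δ)))) :=
      derives_append_left
        (derives_append_right (earley_A2 hprem) (Symbol.nonterminal A' :: (β' ++ δ))) _
    have e : ((w.take i').map Symbol.terminal ++
          (inputSlice w i' j' ++ (Symbol.nonterminal A' :: (β' ++ δ)))) =
        ((w.take j').map Symbol.terminal ++ Symbol.nonterminal A' :: (β' ++ δ)) := by
      rw [← List.append_assoc, prefix_slice hb.1]
    rw [e] at base
    exact hδ.trans ((Relation.ReflTransGen.single step).trans base)
  | scan _ _ ih => exact ih
  | complete _ _ _ ih1 _ => exact ih1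

end Main


/-- a dotted item [A → α • β] is inserted in E_{i,j} iff
(A1) S ⇒* a_1⋯a_i A γ for some γ, and (A2) α ⇒* a_{i+1}⋯a_j. -/
theorem earley_item_characterization (g : CFG T N) (w : List T) (A : N)
    (α β : List (Symbol T N)) (i j : ℕ) (hr : (A, α ++ β) ∈ g.rules)
    (hij : i ≤ j) (hj : j ≤ w.length) :
    Earley g w A α β i j ↔
      ((∃ γ, g.Derives [Symbol.nonterminal g.initial]
          ((w.take i).map Symbol.terminal ++ Symbol.nonterminal A :: γ)) ∧
        g.Derives α (inputSlice w i j)) := by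
  constructor
  · intro h
    exact ⟨earley_A1 h, earley_A2 h⟩
  · rintro ⟨⟨γ, hd⟩, ha⟩
    obtain ⟨n, hn⟩ := derives_iff_der.mp hd
    have h0 : Earley g w A [] (α ++ β) i i :=
      earley_predict_complete n 0 _ γ A (α ++ β) i (le_trans hij hj) hn (Der.refl _) hr
    obtain ⟨m, hm⟩ := derives_iff_der.mp ha
    have := earley_progress m α i j i A [] β hij hj hm (by simpa using h0)
    simpa using this
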